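/- Let Q = T[H_1, …, H_t] be a strong semicomplete composition and let k ≥ 4 be an integer. Then Q has a k-kernel if and only if there is a vertex v ∈ V(Q), say v ∈ V(H_i) for some i ∈ [t], such that {v} is a (k−1)-absorbent set of the digraph Q − (V(H_i) ∖ {v}). -/

import Mathlib

universe u v

/-- There is a directed walk of length at most `n` from `x` to `y`. -/
def ReachIn {V : Type u} (A : V → V → Prop) : ℕ → V → V → Prop
  | 0 => fun x y => x = y
  | n + 1 => fun x y => x = y ∨ ∃ z, A x z ∧ ReachIn A n z y

/-- A digraph is strong if every vertex can reach every other vertex. -/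
def IsStrong {V : Type u} (A : V → V → Prop) : Prop :=
  ∀ x y : V, Relation.ReflTransGen A x y

/-- A digraph is loopless if it has no loops. -/
def Loopless {V : Type u} (A : V → V → Prop) : Prop := ∀ x, ¬ A x x

/-- A digraph is semicomplete if there is at least one arc between any two distinct vertices. -/
def Semicomplete {V : Type u} (A : V → V → Prop) : Prop :=
  ∀ x y : V, x ≠ y → A x y ∨ A y x

/-- The subdigraph induced on a set `s` of vertices. -/
def Restrict {V : Type u} (A : V → V → Prop) (s : Set V) :
    {v // v ∈ s} → {v // v ∈ s} → Prop := fun x y => A x.1 y.1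

/-- `S` is a separator: deleting `S` leaves a non-strong digraph. -/
def IsSeparator {V : Type u} (A : V → V → Prop) (S : Set V) : Prop :=
  ¬ IsStrong (Restrict A Sᶜ)

/-- A digraph is `k`-strong-connected if every separator has at least `k` vertices. -/
def KStrong {V : Type u} (A : V → V → Prop) (k : ℕ) : Prop :=
  ∀ S : Set V, IsSeparator A S → k ≤ S.ncard

/-- The composition `T[H₁, …, H_t]`. -/
def Comp {t : ℕ} (T : Fin t → Fin t → Prop) (V : Fin t → Type u)
    (H : ∀ i, V i → V i → Prop) : (Σ i, V i) → (Σ i, V i) → Prop :=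
  fun p q => T p.1 q.1 ∨ ∃ h : p.1 = q.1, H q.1 (h ▸ p.2) q.2

/-- The complement of the underlying (simple) graph of a digraph. -/
def complUnderlying {V : Type u} (A : V → V → Prop) : SimpleGraph V where
  Adj x y := x ≠ y ∧ ¬ A x y ∧ ¬ A y x
  symm := ⟨fun x y ⟨h1, h2, h3⟩ => ⟨h1.symm, h3, h2⟩⟩
  loopless := ⟨fun x h => h.1 rfl⟩

/-- `x` is a `k`-king: it reaches every vertex by a path of length at most `k`. -/
def IsKKing {V : Type u} (A : V → V → Prop) (k : ℕ) (x : V) : Prop :=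
  ∀ y, ReachIn A k x y

/-- A (directed) path given as a list of vertices. -/
def IsPathList {V : Type u} (A : V → V → Prop) (l : List V) : Prop :=
  l.Nodup ∧ l.Chain' A

/-- A (directed) cycle given as a list of distinct vertices. -/
def IsCycleList {V : Type u} (A : V → V → Prop) (l : List V) : Prop :=
  2 ≤ l.length ∧ l.Nodup ∧ l.Chain' A ∧
    ∀ x ∈ l.getLast?, ∀ y ∈ l.head?, A x y


/-- A set `K` is `ℓ`-absorbent if every vertex outside `K` reaches some vertex of `K`
by a path of length at most `ℓ`. -/
def IsAbsorbent {V : Type u} (A : V → V → Prop) (ℓ : ℕ) (K : Set V) : Prop :=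
  ∀ x ∉ K, ∃ y ∈ K, ReachIn A ℓ x y

/-- A set `K` is `k`-independent if any two distinct vertices of `K` are at distance
at least `k` in both directions. -/
def IsKIndependent {V : Type u} (A : V → V → Prop) (k : ℕ) (K : Set V) : Prop :=
  ∀ x ∈ K, ∀ y ∈ K, x ≠ y → ¬ ReachIn A (k - 1) x y

/-- A `k`-kernel is a `k`-independent and `(k-1)`-absorbent set. -/
def IsKKernel {V : Type u} (A : V → V → Prop) (k : ℕ) (K : Set V) : Prop :=
  IsKIndependent A k K ∧ IsAbsorbent A (k - 1) K

-- auxiliary lemmas to be inserted before stmt10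

theorem reachIn_refl {V : Type u} (A : V → V → Prop) : ∀ n (x : V), ReachIn A n x x
  | 0, _ => rfl
  | _+1, _ => Or.inl rfl

theorem reachIn_mono {V : Type u} (A : V → V → Prop) :
    ∀ {n m : ℕ} {x y : V}, n ≤ m → ReachIn A n x y → ReachIn A m x y := by
  intro n
  induction n with
  | zero =>
    intro m x y _ h
    have hxy : x = y := h
    subst hxy
    exact reachIn_refl A m x
  | succ n ih =>
    intro m x y hnm h
    obtain ⟨m, rfl⟩ : ∃ m', m = m' + 1 := ⟨m - 1, by omega⟩
    rcases h with rfl | ⟨z, hxz, hz⟩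
    · exact Or.inl rfl
    · exact Or.inr ⟨z, hxz, ih (by omega) hz⟩

theorem reachIn_restrict {V : Type u} (A : V → V → Prop) (s : Set V) :
    ∀ (n : ℕ) (x y : {v // v ∈ s}), ReachIn (Restrict A s) n x y → ReachIn A n x.1 y.1 := by
  intro n
  induction n with
  | zero =>
    intro x y h
    have hxy : x = y := h
    exact congrArg Subtype.val hxy
  | succ n ih =>
    intro x y h
    rcases h with rfl | ⟨z, hxz, hz⟩
    · exact Or.inl rfl
    · exact Or.inr ⟨z.1, hxz, ih z y hz⟩

theorem comp_proj {t : ℕ} (T : Fin t → Fin t → Prop) (V : Fin t → Type u)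
    (H : ∀ i, V i → V i → Prop) {x y : Σ i, V i}
    (h : Relation.ReflTransGen (Comp T V H) x y) :
    Relation.ReflTransGen T x.1 y.1 := by
  induction h with
  | refl => exact .refl
  | tail _ hbc ih =>
    rcases hbc with hT | ⟨he, _⟩
    · exact ih.tail hT
    · rwa [he] at ih

theorem short_cycle {t : ℕ} (T : Fin t → Fin t → Prop) (hTl : Loopless T)
    (hsc : Semicomplete T) (hstr : ∀ a b, Relation.ReflTransGen T a b)
    (ht : 2 ≤ t) (i : Fin t) :
    (∃ j, T i j ∧ T j i) ∨ (∃ j l, T i j ∧ T j l ∧ T l i) := by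
  by_contra hcon
  push_neg at hcon
  obtain ⟨h2, h3⟩ := hcon
  have inv : ∀ z, Relation.ReflTransGen T i z → z = i ∨ T i z := by
    intro z hz
    induction hz with
    | refl => exact Or.inl rfl
    | @tail b c _ hbc ih =>
      rcases ih with rfl | hib
      · exact Or.inr hbc
      · by_cases hci : c = i
        · exact Or.inl hci
        · rcases hsc i c (Ne.symm hci) with hic | hci'
          · exact Or.inr hic
          · exact absurd hci' (h3 b c hib hbc)
  obtain ⟨j, hji⟩ := Fintype.exists_ne_of_one_lt_card (by simp; omega) i
  obtain ⟨p, _, hpi⟩ : ∃ p, Relation.ReflTransGen T j p ∧ T p i := by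
    rcases (hstr j i).cases_tail with he | h
    · exact absurd he.symm hji
    · exact h
  rcases inv p (hstr i p) with he | hip
  · exact hTl _ (he ▸ hpi)
  · exact h2 p hip hpi

theorem reach_same_part {t : ℕ} (ht : 2 ≤ t) (V : Fin t → Type u)
    [∀ i, Nonempty (V i)] (T : Fin t → Fin t → Prop) (H : ∀ i, V i → V i → Prop)
    (hTl : Loopless T) (hsc : Semicomplete T)
    (hstr : ∀ a b, Relation.ReflTransGen T a b)
    (i : Fin t) (x y : V i) : ReachIn (Comp T V H) 3 ⟨i, x⟩ ⟨i, y⟩ := by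
  rcases short_cycle T hTl hsc hstr ht i with ⟨j, hij, hji⟩ | ⟨j, l, hij, hjl, hli⟩
  · obtain ⟨z⟩ := ‹∀ i, Nonempty (V i)› j
    refine reachIn_mono _ (show 2 ≤ 3 by omega) ?_
    exact Or.inr ⟨⟨j, z⟩, Or.inl hij, Or.inr ⟨⟨i, y⟩, Or.inl hji, rfl⟩⟩
  · obtain ⟨z⟩ := ‹∀ i, Nonempty (V i)› j
    obtain ⟨w⟩ := ‹∀ i, Nonempty (V i)› l
    exact Or.inr ⟨⟨j, z⟩, Or.inl hij,
      Or.inr ⟨⟨l, w⟩, Or.inl hjl, Or.inr ⟨⟨i, y⟩, Or.inl hli, rfl⟩⟩⟩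

theorem trunc {t : ℕ} (T : Fin t → Fin t → Prop) (V : Fin t → Type u)
    (H : ∀ i, V i → V i → Prop) (i : Fin t) (v : V i) :
    ∀ (n : ℕ) (x : Σ j, V j) (hx : x.1 ≠ i), ReachIn (Comp T V H) n x ⟨i, v⟩ →
      ReachIn (Restrict (Comp T V H) {p : Σ j, V j | p.1 ≠ i ∨ p = ⟨i, v⟩}) n
        ⟨x, Or.inl hx⟩ ⟨⟨i, v⟩, Or.inr rfl⟩ := by
  intro n
  induction n with
  | zero =>
    intro x hx h
    exact absurd (congrArg Sigma.fst (h : x = ⟨i, v⟩)) hx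
  | succ n ih =>
    intro x hx h
    rcases h with he | ⟨z, hxz, hz⟩
    · exact absurd (congrArg Sigma.fst he) hx
    · by_cases hzi : z.1 = i
      · have harc : Comp T V H x ⟨i, v⟩ := by
          rcases hxz with hT | ⟨he, _⟩
          · exact Or.inl (hzi ▸ hT)
          · exact absurd (he.trans hzi) hx
        exact Or.inr ⟨⟨⟨i, v⟩, Or.inr rfl⟩, harc, reachIn_refl _ n _⟩
      · exact Or.inr ⟨⟨z, Or.inl hzi⟩, hxz, ih z hzi hz⟩


/-- For `k ≥ 4`, a strong semicomplete composition `Q` has a `k`-kernel iff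
there are `i` and `v ∈ V(H_i)` such that `{v}` is a `(k-1)`-absorbent set of
`Q - (V(H_i) \ {v})`. -/
theorem stmt10 {t : ℕ} (ht : 2 ≤ t) (V : Fin t → Type u) [∀ i, Fintype (V i)]
    [∀ i, Nonempty (V i)] (T : Fin t → Fin t → Prop) (H : ∀ i, V i → V i → Prop)
    (hTl : Loopless T) (hHl : ∀ i, Loopless (H i)) (hsc : Semicomplete T)
    (hstrong : IsStrong (Comp T V H)) (k : ℕ) (hk : 4 ≤ k) :
    (∃ K : Set (Σ i, V i), IsKKernel (Comp T V H) k K) ↔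
      ∃ (i : Fin t) (v : V i),
        IsAbsorbent (Restrict (Comp T V H) {p : Σ j, V j | p.1 ≠ i ∨ p = ⟨i, v⟩})
          (k - 1) {x | x.1 = (⟨i, v⟩ : Σ j, V j)} := by
  have hTstr : ∀ a b, Relation.ReflTransGen T a b := by
    intro a b
    have h := hstrong ⟨a, Classical.arbitrary (V a)⟩ ⟨b, Classical.arbitrary (V b)⟩
    exact comp_proj T V H h
  constructor
  · rintro ⟨K, hind, habs⟩
    have hKne : ∃ w, w ∈ K := by
      by_contra hemp
      push_neg at hemp
      have i0 : Fin t := ⟨0, by omega⟩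
      obtain ⟨y, hy, -⟩ := habs ⟨i0, Classical.arbitrary (V i0)⟩ (hemp _)
      exact hemp y hy
    obtain ⟨w, hw⟩ := hKne
    have huniq : ∀ x ∈ K, x = w := by
      intro x hx
      by_contra hne
      rcases eq_or_ne x.1 w.1 with hfst | hfst
      · obtain ⟨xi, xa⟩ := x
        obtain ⟨wi, wa⟩ := w
        have hE : xi = wi := hfst
        subst hE
        exact hind _ hx _ hw hne
          (reachIn_mono _ (show 3 ≤ k - 1 by omega)
            (reach_same_part ht V T H hTl hsc hTstr xi xa wa))
      · rcases hsc x.1 w.1 hfst with h | h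
        · exact hind x hx w hw hne
            (reachIn_mono _ (show 1 ≤ k - 1 by omega) (Or.inr ⟨w, Or.inl h, rfl⟩))
        · exact hind w hw x hx (Ne.symm hne)
            (reachIn_mono _ (show 1 ≤ k - 1 by omega) (Or.inr ⟨x, Or.inl h, rfl⟩))
    have hK : K = {w} := Set.eq_singleton_iff_unique_mem.mpr ⟨hw, huniq⟩
    obtain ⟨i, v⟩ := w
    refine ⟨i, v, ?_⟩
    intro x hxK
    have hx1 : x.1.1 ≠ i := by
      rcases x.2 with h | h
      · exact h
      · exact absurd h hxK
    have hxnotK : x.1 ∉ K := by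
      rw [hK]
      intro h
      exact hx1 (congrArg Sigma.fst h)
    obtain ⟨y, hyK, hre⟩ := habs x.1 hxnotK
    rw [hK] at hyK
    have hy : y = ⟨i, v⟩ := hyK
    subst hy
    refine ⟨⟨⟨i, v⟩, Or.inr rfl⟩, rfl, ?_⟩
    exact trunc T V H i v (k - 1) x.1 hx1 hre
  · rintro ⟨i, v, habs⟩
    refine ⟨{⟨i, v⟩}, ?_, ?_⟩
    · intro x hx y hy hne
      rw [Set.mem_singleton_iff] at hx hy
      exact absurd (hx.trans hy.symm) hne
    · intro x hx
      refine ⟨⟨i, v⟩, rfl, ?_⟩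
      by_cases hfst : x.1 = i
      · obtain ⟨xi, xa⟩ := x
        have hE : xi = i := hfst
        subst hE
        exact reachIn_mono _ (show 3 ≤ k - 1 by omega)
          (reach_same_part ht V T H hTl hsc hTstr xi xa v)
      · have hxs : x ∈ {p : Σ j, V j | p.1 ≠ i ∨ p = ⟨i, v⟩} := Or.inl hfst
        have hxK : (⟨x, hxs⟩ : {p // p ∈ {p : Σ j, V j | p.1 ≠ i ∨ p = ⟨i, v⟩}}) ∉
            {x : {p // p ∈ {p : Σ j, V j | p.1 ≠ i ∨ p = ⟨i, v⟩}} | x.1 = (⟨i, v⟩ : Σ j, V j)} := by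
          intro h
          exact hfst (congrArg Sigma.fst h)
        obtain ⟨y, hy, hre⟩ := habs ⟨x, hxs⟩ hxK
        have h2 := reachIn_restrict _ _ _ _ _ hre
        rwa [hy] at h2
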